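/- For every integer N ≥ 1, let B ⊂ ℝ³ be the convex hull of the four points (N,0,0), (−N,0,0), (0,N,1), (0,−N,1), and let A = ℤ³ ∩ B. Then |A| = 4N + 2 and |A + A| ≥ (2N + 1)². -/

import Mathlib

open Pointwise

private lemma vec_eta3 (x : Fin 3 → ℝ) : x = ![x 0, x 1, x 2] := by
  funext i; fin_cases i <;> rfl

/-- counterexample for non-symmetric convex bodies. -/
theorem nonsymmetric_counterexample (N : ℕ) (hN : 1 ≤ N)
    (B : Set (Fin 3 → ℝ))
    (hB : B = convexHull ℝ {![(N : ℝ), 0, 0], ![-(N : ℝ), 0, 0],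
      ![0, (N : ℝ), 1], ![0, -(N : ℝ), 1]})
    (A : Set (Fin 3 → ℝ))
    (hA : A = {x | ∀ i, ∃ z : ℤ, x i = (z : ℝ)} ∩ B) :
    A.ncard = 4 * N + 2 ∧ (2 * N + 1) ^ 2 ≤ (A + A).ncard := by
  classical
  have hN0 : (0:ℝ) < (N:ℝ) := by exact_mod_cast hN
  set V : Set (Fin 3 → ℝ) := {![(N : ℝ), 0, 0], ![-(N : ℝ), 0, 0],
      ![0, (N : ℝ), 1], ![0, -(N : ℝ), 1]} with hV
  -- forward membership: explicit lattice points are in the hull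
  have mem0 : ∀ k : ℤ, -(N:ℤ) ≤ k → k ≤ N → (![(k:ℝ),0,0]) ∈ convexHull ℝ V := by
    intro k hk1 hk2
    have h1 : ![(N:ℝ),0,0] ∈ convexHull ℝ V := subset_convexHull ℝ V (by simp [hV])
    have h2 : ![-(N:ℝ),0,0] ∈ convexHull ℝ V := subset_convexHull ℝ V (by simp [hV])
    have hk1' : (-(N:ℝ)) ≤ (k:ℝ) := by exact_mod_cast hk1
    have hk2' : (k:ℝ) ≤ (N:ℝ) := by exact_mod_cast hk2
    have hseg : (![(k:ℝ),0,0]) ∈ segment ℝ (![(N:ℝ),0,0]) (![-(N:ℝ),0,0]) := by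
      refine ⟨((N:ℝ)+k)/(2*N), ((N:ℝ)-k)/(2*N), ?_, ?_, ?_, ?_⟩
      · apply div_nonneg (by linarith) (by linarith)
      · apply div_nonneg (by linarith) (by linarith)
      · field_simp; ring
      · funext i
        fin_cases i <;> simp [Pi.smul_apply, smul_eq_mul] <;> field_simp <;> ring
    exact (convex_convexHull ℝ V).segment_subset h1 h2 hseg
  have mem1 : ∀ k : ℤ, -(N:ℤ) ≤ k → k ≤ N → (![0,(k:ℝ),1]) ∈ convexHull ℝ V := by
    intro k hk1 hk2
    have h1 : ![0,(N:ℝ),1] ∈ convexHull ℝ V := subset_convexHull ℝ V (by simp [hV])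
    have h2 : ![0,-(N:ℝ),1] ∈ convexHull ℝ V := subset_convexHull ℝ V (by simp [hV])
    have hk1' : (-(N:ℝ)) ≤ (k:ℝ) := by exact_mod_cast hk1
    have hk2' : (k:ℝ) ≤ (N:ℝ) := by exact_mod_cast hk2
    have hseg : (![0,(k:ℝ),1]) ∈ segment ℝ (![0,(N:ℝ),1]) (![0,-(N:ℝ),1]) := by
      refine ⟨((N:ℝ)+k)/(2*N), ((N:ℝ)-k)/(2*N), ?_, ?_, ?_, ?_⟩
      · apply div_nonneg (by linarith) (by linarith)
      · apply div_nonneg (by linarith) (by linarith)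
      · field_simp; ring
      · funext i
        fin_cases i <;> simp [Pi.smul_apply, smul_eq_mul] <;> field_simp <;> ring
    exact (convex_convexHull ℝ V).segment_subset h1 h2 hseg
  -- bounding convex region C
  set C : Set (Fin 3 → ℝ) := {x | 0 ≤ x 2 ∧ x 2 ≤ 1 ∧ x 0 + N * x 2 ≤ N ∧
      -(N:ℝ) ≤ x 0 - N * x 2 ∧ x 1 ≤ N * x 2 ∧ -(N * x 2) ≤ x 1} with hC
  have hCconv : Convex ℝ C := by
    intro x hx y hy a b ha hb hab
    obtain ⟨h1,h2,h3,h4,h5,h6⟩ := hx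
    obtain ⟨g1,g2,g3,g4,g5,g6⟩ := hy
    simp only [hC, Set.mem_setOf_eq, Pi.add_apply, Pi.smul_apply, smul_eq_mul]
    refine ⟨?_, ?_, ?_, ?_, ?_, ?_⟩
    · exact add_nonneg (mul_nonneg ha h1) (mul_nonneg hb g1)
    · nlinarith [mul_le_mul_of_nonneg_left h2 ha, mul_le_mul_of_nonneg_left g2 hb]
    · nlinarith [mul_le_mul_of_nonneg_left h3 ha, mul_le_mul_of_nonneg_left g3 hb]
    · nlinarith [mul_le_mul_of_nonneg_left h4 ha, mul_le_mul_of_nonneg_left g4 hb]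
    · nlinarith [mul_le_mul_of_nonneg_left h5 ha, mul_le_mul_of_nonneg_left g5 hb]
    · nlinarith [mul_le_mul_of_nonneg_left h6 ha, mul_le_mul_of_nonneg_left g6 hb]
  have hVC : V ⊆ C := by
    intro x hx
    simp only [hV, Set.mem_insert_iff, Set.mem_singleton_iff] at hx
    rcases hx with h | h | h | h <;> subst h <;>
      simp only [hC, Set.mem_setOf_eq] <;>
      norm_num [Matrix.cons_val_two, Matrix.vecHead, Matrix.vecTail] <;> constructor <;> linarith
  have hullC : convexHull ℝ V ⊆ C := convexHull_min hVC hCconv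
  -- the explicit finset
  set S0 : Finset (Fin 3 → ℝ) :=
    (Finset.Icc (-(N:ℤ)) N).image (fun k : ℤ => ![(k:ℝ), 0, 0]) with hS0
  set S1 : Finset (Fin 3 → ℝ) :=
    (Finset.Icc (-(N:ℤ)) N).image (fun k : ℤ => ![0, (k:ℝ), 1]) with hS1
  have hAeq : A = ↑(S0 ∪ S1) := by
    ext x
    simp only [hA, hB, Set.mem_inter_iff, Set.mem_setOf_eq, Finset.coe_union,
      Set.mem_union, Finset.mem_coe, hS0, hS1, Finset.mem_image, Finset.mem_Icc]
    constructor
    · rintro ⟨hint, hhull⟩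
      obtain ⟨z0, hz0⟩ := hint 0
      obtain ⟨z1, hz1⟩ := hint 1
      obtain ⟨z2, hz2⟩ := hint 2
      have hxC := hullC hhull
      obtain ⟨h1,h2,h3,h4,h5,h6⟩ := hxC
      rw [hz2] at h1 h2 h3 h4 h5 h6
      have hz2' : z2 = 0 ∨ z2 = 1 := by
        have : (0:ℤ) ≤ z2 := by exact_mod_cast h1
        have : z2 ≤ 1 := by exact_mod_cast h2
        omega
      rcases hz2' with h | h
      · subst h
        left
        refine ⟨z0, ⟨?_, ?_⟩, ?_⟩
        · have : -(N:ℝ) ≤ (z0:ℝ) := by rw [← hz0]; push_cast at h4 ⊢; linarith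
          exact_mod_cast this
        · have : (z0:ℝ) ≤ N := by rw [← hz0]; push_cast at h3 ⊢; linarith
          exact_mod_cast this
        · have hx1 : x 1 = 0 := by push_cast at h5 h6; linarith
          rw [vec_eta3 x, hz0, hx1, hz2]
          norm_num
      · subst h
        right
        refine ⟨z1, ⟨?_, ?_⟩, ?_⟩
        · have : -(N:ℝ) ≤ (z1:ℝ) := by rw [← hz1]; push_cast at h6 ⊢; linarith
          exact_mod_cast this
        · have : (z1:ℝ) ≤ N := by rw [← hz1]; push_cast at h5 ⊢; linarith
          exact_mod_cast this
        · have hx0 : x 0 = 0 := by push_cast at h3 h4; linarith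
          rw [vec_eta3 x, hz1, hx0, hz2]
          norm_num
    · rintro (⟨k, ⟨hk1, hk2⟩, rfl⟩ | ⟨k, ⟨hk1, hk2⟩, rfl⟩)
      · refine ⟨fun i => ?_, mem0 k hk1 hk2⟩
        fin_cases i
        exacts [⟨k, by norm_num⟩, ⟨0, by norm_num⟩, ⟨0, by norm_num⟩]
      · refine ⟨fun i => ?_, mem1 k hk1 hk2⟩
        fin_cases i
        exacts [⟨0, by norm_num⟩, ⟨k, by norm_num⟩, ⟨1, by norm_num⟩]
  -- cardinality of A
  have hinj0 : Set.InjOn (fun k : ℤ => ![(k:ℝ), 0, 0]) ↑(Finset.Icc (-(N:ℤ)) N) := by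
    intro a _ b _ h
    have := congrFun h 0
    simp at this
    exact_mod_cast this
  have hinj1 : Set.InjOn (fun k : ℤ => ![0, (k:ℝ), 1]) ↑(Finset.Icc (-(N:ℤ)) N) := by
    intro a _ b _ h
    have := congrFun h 1
    simp at this
    exact_mod_cast this
  have hIcc : (Finset.Icc (-(N:ℤ)) N).card = 2 * N + 1 := by
    rw [Int.card_Icc]; omega
  have hdisj : Disjoint S0 S1 := by
    rw [Finset.disjoint_left]
    rintro x hx hx'
    simp only [hS0, hS1, Finset.mem_image] at hx hx'
    obtain ⟨k, _, rfl⟩ := hx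
    obtain ⟨m, _, hm⟩ := hx'
    have := congrFun hm 2
    norm_num [Matrix.cons_val_two, Matrix.vecHead, Matrix.vecTail] at this
  have hcard : A.ncard = 4 * N + 2 := by
    rw [hAeq, Set.ncard_coe_finset, Finset.card_union_of_disjoint hdisj,
      hS0, hS1, Finset.card_image_of_injOn hinj0, Finset.card_image_of_injOn hinj1, hIcc]
    ring
  refine ⟨hcard, ?_⟩
  -- sumset lower bound
  set T : Finset (Fin 3 → ℝ) :=
    ((Finset.Icc (-(N:ℤ)) N) ×ˢ (Finset.Icc (-(N:ℤ)) N)).image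
      (fun p : ℤ × ℤ => ![(p.1:ℝ), (p.2:ℝ), 1]) with hT
  have hTinj : Set.InjOn (fun p : ℤ × ℤ => ![(p.1:ℝ), (p.2:ℝ), 1])
      ↑((Finset.Icc (-(N:ℤ)) N) ×ˢ (Finset.Icc (-(N:ℤ)) N)) := by
    intro a _ b _ h
    have h0 := congrFun h 0
    have h1 := congrFun h 1
    simp at h0 h1
    exact Prod.ext (by exact_mod_cast h0) (by exact_mod_cast h1)
  have hTcard : T.card = (2 * N + 1) ^ 2 := by
    rw [hT, Finset.card_image_of_injOn hTinj, Finset.card_product, hIcc]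
    ring
  have hTsub : (↑T : Set (Fin 3 → ℝ)) ⊆ A + A := by
    intro x hx
    simp only [hT, Finset.coe_image, Set.mem_image, Finset.mem_coe,
      Finset.mem_product, Finset.mem_Icc] at hx
    obtain ⟨⟨k, m⟩, ⟨⟨hk1, hk2⟩, ⟨hm1, hm2⟩⟩, rfl⟩ := hx
    have ha : (![(k:ℝ),0,0]) ∈ A := by
      rw [hAeq]
      simp only [Finset.coe_union, Set.mem_union, Finset.mem_coe, hS0, Finset.mem_image,
        Finset.mem_Icc]
      exact Or.inl ⟨k, ⟨hk1, hk2⟩, rfl⟩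
    have hb : (![0,(m:ℝ),1]) ∈ A := by
      rw [hAeq]
      simp only [Finset.coe_union, Set.mem_union, Finset.mem_coe, hS1, Finset.mem_image,
        Finset.mem_Icc]
      exact Or.inr ⟨m, ⟨hm1, hm2⟩, rfl⟩
    refine Set.mem_add.mpr ⟨_, ha, _, hb, ?_⟩
    funext i; fin_cases i <;> simp
  have hAfin : A.Finite := by rw [hAeq]; exact (S0 ∪ S1).finite_toSet
  have hsumfin : (A + A).Finite := hAfin.add hAfin
  calc (2 * N + 1) ^ 2 = (↑T : Set (Fin 3 → ℝ)).ncard := by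
        rw [Set.ncard_coe_finset, hTcard]
    _ ≤ (A + A).ncard := Set.ncard_le_ncard hTsub hsumfin
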